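/- (Non-identifiability with a singleton cluster.) Let c : Fin p → Fin q be a clustering, and suppose some cluster k* contains exactly one element, i.e. there is a unique j with c j = k*. Let C be the associated clustering matrix, let d : Fin p → ℝ be a positive vector and let Σ be a symmetric positive definite q×q real matrix. Then there exist a positive vector d' : Fin p → ℝ and a symmetric positive definite q×q real matrix Σ' with (d', Σ') ≠ (d, Σ) such that diag(d') + C Σ' Cᵀ = diag(d) + C Σ Cᵀ. -/

import Mathlib

open Matrix

/-- The clustering matrix associated with a clustering `c` of `p` variables into
`q` clusters: `C j k = 1` if `c j = k` and `0` otherwise. -/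
def clusterMatrix {p q : ℕ} (c : Fin p → Fin q) : Matrix (Fin p) (Fin q) ℝ :=
  Matrix.of fun j k => if c j = k then 1 else 0

lemma cluster_conj {p q : ℕ} (c : Fin p → Fin q) (M : Matrix (Fin q) (Fin q) ℝ)
    (i j : Fin p) :
    (clusterMatrix c * M * (clusterMatrix c)ᵀ) i j = M (c i) (c j) := by
  simp [clusterMatrix, Matrix.mul_apply, Matrix.transpose_apply, Finset.sum_ite_eq,
    Finset.sum_ite_eq', ite_mul, mul_ite]


/-- Non-identifiability with a singleton cluster: if some cluster contains exactly
one element, the decomposition `diag(d) + C Σ Cᵀ` is not unique. -/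
theorem stmt5 {p q : ℕ} (c : Fin p → Fin q) (kstar : Fin q)
    (hsingleton : ∃! j : Fin p, c j = kstar)
    (d : Fin p → ℝ) (hd : ∀ j, 0 < d j)
    (Sg : Matrix (Fin q) (Fin q) ℝ) (hSg : Sg.PosDef) :
    ∃ (d' : Fin p → ℝ) (Sg' : Matrix (Fin q) (Fin q) ℝ),
      (∀ j, 0 < d' j) ∧ Sg'.PosDef ∧ (d', Sg') ≠ (d, Sg) ∧
      Matrix.diagonal d' + clusterMatrix c * Sg' * (clusterMatrix c)ᵀ
        = Matrix.diagonal d + clusterMatrix c * Sg * (clusterMatrix c)ᵀ := by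
  obtain ⟨j0, hj0, huniq⟩ := hsingleton
  set ε : ℝ := d j0 / 2 with hε
  have hεpos : 0 < ε := by have := hd j0; rw [hε]; linarith
  refine ⟨fun j => if j = j0 then ε else d j, Sg + Matrix.single kstar kstar ε,
    ?_, ?_, ?_, ?_⟩
  · intro j; dsimp only; split <;> [exact hεpos; exact hd j]
  · refine Matrix.PosDef.of_dotProduct_mulVec_pos ?_ ?_
    · unfold Matrix.IsHermitian
      rw [conjTranspose_add, hSg.1.eq]
      congr 1
      ext a b
      simp [Matrix.single, Matrix.conjTranspose_apply, and_comm]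
    · intro x hx
      have h1 := hSg.dotProduct_mulVec_pos hx
      have : star x ⬝ᵥ ((Sg + Matrix.single kstar kstar ε) *ᵥ x)
          = star x ⬝ᵥ (Sg *ᵥ x) + ε * (x kstar * x kstar) := by
        rw [Matrix.add_mulVec, dotProduct_add]
        congr 1
        simp [Matrix.mulVec, dotProduct, Matrix.single, ite_and, Finset.sum_ite_eq,
          ite_mul, mul_ite]
        ring
      simp only [this] at *
      have := mul_self_nonneg (x kstar)
      positivity
  · intro h
    have := congrFun (congrArg Prod.fst h) j0
    simp [hε] at this
    linarith [hd j0]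
  · ext i j
    have hci : ∀ i : Fin p, c i = kstar ↔ i = j0 := fun i =>
      ⟨fun h => huniq i h, fun h => h ▸ hj0⟩
    simp only [Matrix.add_apply, cluster_conj, Matrix.diagonal_apply,
      Matrix.add_apply, Matrix.single]
    by_cases hij : i = j
    · subst hij
      by_cases h : i = j0
      · subst h
        simp [hj0, hε]; ring
      · have : ¬ kstar = c i := fun hk => h (huniq i hk.symm)
        simp [this, h]
    · have : ¬ (kstar = c i ∧ kstar = c j) := by
        rintro ⟨h1, h2⟩
        exact hij (((hci i).1 h1.symm).trans ((hci j).1 h2.symm).symm)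
      simp [hij, Matrix.of_apply, this]
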